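/- Let n = N and let P be an invertible real n×n matrix. Then K_P(P) = −(2·K(P)/n)·( P^{−ᵀ} − n·P/|P|² ), where P^{−ᵀ} denotes the inverse transpose of P. -/

import Mathlib

open Matrix

/-- The dilation function `K(P) = |P|² / det(PᵀP)^(1/n)`, where `|P|² = tr(PᵀP)`. -/
noncomputable def dil {N n : ℕ} (P : Matrix (Fin N) (Fin n) ℝ) : ℝ :=
  (Pᵀ * P).trace / (Pᵀ * P).det ^ ((1 : ℝ) / n)

/-- The Ahlfors operator `S(A) = (A + Aᵀ)/2 − (tr(A)/n)·I`. -/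
noncomputable def ahl {n : ℕ} (A : Matrix (Fin n) (Fin n) ℝ) : Matrix (Fin n) (Fin n) ℝ :=
  (2⁻¹ : ℝ) • (A + Aᵀ) - (A.trace / (n : ℝ)) • 1

/-- `K_P(P) = 2·P·(PᵀP)⁻¹·S(PᵀP)/det(PᵀP)^(1/n)`. -/
noncomputable def dilGrad {N n : ℕ} (P : Matrix (Fin N) (Fin n) ℝ) : Matrix (Fin N) (Fin n) ℝ :=
  (2 / (Pᵀ * P).det ^ ((1 : ℝ) / n)) • (P * (Pᵀ * P)⁻¹ * ahl (Pᵀ * P))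

/-- for `n = N` and `P` an invertible real `n×n` matrix,
`K_P(P) = −(2·K(P)/n)·( P^{−ᵀ} − n·P/|P|² )`. -/
theorem dilGrad_eq_of_invertible (n : ℕ) (hn : 1 ≤ n)
    (P : Matrix (Fin n) (Fin n) ℝ) (hP : IsUnit P.det) :
    dilGrad P =
      (-(2 * dil P / (n : ℝ))) • ((P⁻¹)ᵀ - ((n : ℝ) / (Pᵀ * P).trace) • P) := by
  have hdne : P.det ≠ 0 := isUnit_iff_ne_zero.mp hP
  have hPne : P ≠ 0 := by
    intro h; rw [h] at hdne
    exact hdne (haveI := Fin.pos_iff_nonempty.mp hn; Matrix.det_zero)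
  set t : ℝ := (Pᵀ * P).trace with ht
  have htpos : 0 < t := by
    have hsum : t = ∑ i, ∑ j, (P j i)^2 := by
      simp [ht, Matrix.trace, Matrix.diag, Matrix.mul_apply, sq]
    have hnn : 0 ≤ t := by rw [hsum]; positivity
    rcases hnn.lt_or_eq with h | h
    · exact h
    · exfalso
      apply hPne
      ext j i
      have hz : ∑ i, ∑ j, (P j i)^2 = 0 := by rw [← hsum, ← h]
      have h1 := (Finset.sum_eq_zero_iff_of_nonneg (fun i _ => by positivity)).mp hz
      have h2 := (Finset.sum_eq_zero_iff_of_nonneg (fun j _ => by positivity)).mp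
        (h1 i (Finset.mem_univ i)) j (Finset.mem_univ j)
      simpa using h2
  have htne : t ≠ 0 := ne_of_gt htpos
  have hdetpos : 0 < (Pᵀ * P).det := by
    have h : (Pᵀ * P).det = P.det ^ 2 := by
      rw [Matrix.det_mul, Matrix.det_transpose, sq]
    rw [h]; exact pow_two_pos_of_ne_zero hdne
  set d : ℝ := (Pᵀ * P).det ^ ((1 : ℝ) / n) with hd
  have hdpos : 0 < d := Real.rpow_pos_of_pos hdetpos _
  have hdnz : d ≠ 0 := hdpos.ne'
  have hnne : (n : ℝ) ≠ 0 := Nat.cast_ne_zero.mpr (by omega)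
  have hunit : IsUnit (Pᵀ * P).det := isUnit_iff_ne_zero.mpr hdetpos.ne'
  have hsym : (Pᵀ * P)ᵀ = Pᵀ * P := by
    rw [Matrix.transpose_mul, Matrix.transpose_transpose]
  have hahl : ahl (Pᵀ * P) = (Pᵀ * P) - (t / n) • (1 : Matrix (Fin n) (Fin n) ℝ) := by
    rw [ahl, hsym, ← ht, ← two_smul ℝ (Pᵀ * P), smul_smul]
    norm_num
  have hinv : P * (Pᵀ * P)⁻¹ = (P⁻¹)ᵀ := by
    rw [Matrix.mul_inv_rev, ← Matrix.mul_assoc, Matrix.mul_nonsing_inv _ hP,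
      Matrix.one_mul, Matrix.transpose_nonsing_inv]
  have hmul : P * (Pᵀ * P)⁻¹ * ahl (Pᵀ * P) = P - (t / n) • (P⁻¹)ᵀ := by
    rw [hahl, Matrix.mul_sub, Matrix.mul_smul, Matrix.mul_one, hinv,
      ← Matrix.mul_assoc, ← Matrix.transpose_mul, Matrix.mul_nonsing_inv _ hP,
      Matrix.transpose_one, Matrix.one_mul]
  have hdil : dil P = t / d := rfl
  rw [dilGrad, ← hd, hmul, hdil]
  match_scalars <;> field_simp <;> ring
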